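/- Let (F,G) be a cross-Sperner pair of families of subsets of [n], and suppose there exist sets F₀ ∈ F and G₀ ∈ G with |F₀| + |G₀| < ⌈n/2⌉ − 1. Then |F| + |G| < 2^n − 2^⌈n/2⌉ − 2^⌊n/2⌋ + 1. -/

import Mathlib

/-- A pair of families `(𝓕, 𝓖)` is cross-Sperner if there is no pair
`F ∈ 𝓕`, `G ∈ 𝓖` with `F ⊆ G` or `G ⊆ F`. -/
def CrossSperner (𝓕 𝓖 : Finset (Finset ℕ)) : Prop :=
  ∀ F ∈ 𝓕, ∀ G ∈ 𝓖, ¬ F ⊆ G ∧ ¬ G ⊆ F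

theorem cross_sperner_small_sets (n : ℕ) (𝓕 𝓖 : Finset (Finset ℕ))
    (h𝓕 : 𝓕 ⊆ (Finset.Icc 1 n).powerset) (h𝓖 : 𝓖 ⊆ (Finset.Icc 1 n).powerset)
    (h : CrossSperner 𝓕 𝓖)
    (F₀ G₀ : Finset ℕ) (hF₀ : F₀ ∈ 𝓕) (hG₀ : G₀ ∈ 𝓖)
    (hsmall : F₀.card + G₀.card < (n + 1) / 2 - 1) :
    𝓕.card + 𝓖.card < 2 ^ n - 2 ^ ((n + 1) / 2) - 2 ^ (n / 2) + 1 := by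
  classical
  set A := Finset.Icc 1 n with hA
  have hF₀A : F₀ ⊆ A := Finset.mem_powerset.mp (h𝓕 hF₀)
  have hG₀A : G₀ ⊆ A := Finset.mem_powerset.mp (h𝓖 hG₀)
  set K := F₀ ∪ G₀ with hK
  have hKA : K ⊆ A := Finset.union_subset hF₀A hG₀A
  have hAcard : A.card = n := by simp [hA]
  have hk : K.card ≤ F₀.card + G₀.card := Finset.card_union_le _ _
  set B := ((A \ K).powerset).image (· ∪ K) with hB
  have hBsub : B ⊆ A.powerset := by
    intro x hx
    simp only [hB, Finset.mem_image, Finset.mem_powerset] at hx ⊢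
    obtain ⟨S, hS, rfl⟩ := hx
    exact Finset.union_subset (hS.trans Finset.sdiff_subset) hKA
  have hKB : ∀ x ∈ B, K ⊆ x := by
    intro x hx
    simp only [hB, Finset.mem_image] at hx
    obtain ⟨S, hS, rfl⟩ := hx
    exact Finset.subset_union_right
  have hBcard : B.card = 2 ^ (n - K.card) := by
    rw [hB, Finset.card_image_of_injOn, Finset.card_powerset,
      Finset.card_sdiff_of_subset hKA, hAcard]
    intro S hS T hT hST
    have hS' : Disjoint S K :=
      (Finset.subset_sdiff.mp (Finset.mem_powerset.mp hS)).2
    have hT' : Disjoint T K :=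
      (Finset.subset_sdiff.mp (Finset.mem_powerset.mp hT)).2
    have hh : (S ∪ K) \ K = (T ∪ K) \ K := by
      simpa using congrArg (· \ K) hST
    rwa [Finset.union_sdiff_cancel_right hS',
      Finset.union_sdiff_cancel_right hT'] at hh
  have hFG : Disjoint 𝓕 𝓖 := by
    rw [Finset.disjoint_left]
    intro x hxF hxG
    exact (h x hxF x hxG).1 subset_rfl
  have hFB : Disjoint 𝓕 B := by
    rw [Finset.disjoint_left]
    intro x hxF hxB
    exact (h x hxF G₀ hG₀).2 (Finset.subset_union_right.trans (hKB x hxB))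
  have hGB : Disjoint 𝓖 B := by
    rw [Finset.disjoint_left]
    intro x hxG hxB
    exact (h F₀ hF₀ x hxG).1 (Finset.subset_union_left.trans (hKB x hxB))
  have hsub : 𝓕 ∪ 𝓖 ∪ B ⊆ A.powerset :=
    Finset.union_subset (Finset.union_subset h𝓕 h𝓖) hBsub
  have hcard : 𝓕.card + 𝓖.card + 2 ^ (n - K.card) ≤ 2 ^ n := by
    have h1 : (𝓕 ∪ 𝓖 ∪ B).card ≤ A.powerset.card := Finset.card_le_card hsub
    rwa [Finset.card_union_of_disjoint (Finset.disjoint_union_left.mpr ⟨hFB, hGB⟩),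
      Finset.card_union_of_disjoint hFG, Finset.card_powerset, hAcard, hBcard] at h1
  have hexp : n / 2 + 2 ≤ n - K.card := by omega
  have h2 : (2:ℕ) ^ (n / 2 + 2) ≤ 2 ^ (n - K.card) :=
    Nat.pow_le_pow_right (by norm_num) hexp
  have h3 : (2:ℕ) ^ ((n + 1) / 2) ≤ 2 * 2 ^ (n / 2) := by
    calc (2:ℕ) ^ ((n + 1) / 2) ≤ 2 ^ (n / 2 + 1) :=
          Nat.pow_le_pow_right (by norm_num) (by omega)
      _ = 2 * 2 ^ (n / 2) := by ring
  have h4 : (2:ℕ) ^ (n / 2 + 2) = 4 * 2 ^ (n / 2) := by ring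
  have h5 : 1 ≤ (2:ℕ) ^ (n / 2) := Nat.one_le_two_pow
  omega
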